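/- Let p be a prime and f ∈ (ZMod p)[X]. Then f is additive, i.e. aeval (X₀ + X₁) f = aeval X₀ f + aeval X₁ f in MvPolynomial (Fin 2) (ZMod p) where X₀, X₁ are the two variables, if and only if f lies in the (ZMod p)-linear span of {X^{p^i} : i ∈ ℕ}. -/

import Mathlib

open Polynomial
lemma aux1 {R : Type*} [CommRing R] (c : Polynomial R) (f : Polynomial R) (n : ℕ) :
    (Polynomial.aeval (Polynomial.C c * Polynomial.X : Polynomial (Polynomial R)) f).coeff n =
      Polynomial.C (f.coeff n) * c ^ n := by
  induction f using Polynomial.induction_on' with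
  | add a b ha hb => simp [ha, hb, add_mul]
  | monomial e a =>
    rw [Polynomial.aeval_monomial, mul_pow, ← Polynomial.C_pow, ← mul_assoc]
    rw [Polynomial.coeff_monomial]
    simp only [Polynomial.algebraMap_apply, Polynomial.coe_mapRingHom]
    rcases eq_or_ne e n with rfl | h
    · simp only [← Polynomial.C_mul, Polynomial.coeff_C_mul, Polynomial.coeff_X_pow, if_pos rfl,
        mul_one, Polynomial.algebraMap_eq, if_pos rfl]
      simp [mul_comm]
    · simp only [← Polynomial.C_mul, Polynomial.coeff_C_mul, Polynomial.coeff_X_pow,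
        if_neg (Ne.symm h), mul_zero, if_neg h, Polynomial.algebraMap_eq]
      simp

lemma aux2 (p : ℕ) [hp : Fact p.Prime] {n : ℕ} (hn : 0 < n)
    (h : ∀ k, 0 < k → k < n → p ∣ n.choose k) : ∃ i, n = p ^ i := by
  set a := Nat.log p n with ha
  rcases eq_or_ne n (p ^ a) with he | he
  · exact ⟨a, he⟩
  have h1p : 1 < p := hp.out.one_lt
  have hppos : 0 < p ^ a := Nat.pow_pos (by omega)
  have hle : p ^ a ≤ n := Nat.pow_log_le_self p hn.ne'
  have hlt : n < p ^ (a + 1) := Nat.lt_pow_succ_log_self h1p n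
  have hklt : p ^ a < n := lt_of_le_of_ne hle (Ne.symm he)
  have hL : n.choose (p ^ a) ≡
      ∏ i ∈ Finset.range (a + 1), (n / p ^ i % p).choose (p ^ a / p ^ i % p) [MOD p] :=
    Choose.lucas_theorem_nat hlt (hklt.trans hlt)
  have hda : n / p ^ a < p := Nat.div_lt_of_lt_mul (by rw [← pow_succ]; exact hlt)
  have hdpos : 0 < n / p ^ a := Nat.div_pos hle hppos
  have hprod : ∏ i ∈ Finset.range (a + 1), (n / p ^ i % p).choose (p ^ a / p ^ i % p)
      = n / p ^ a := by
    rw [Finset.prod_range_succ]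
    have h2 : ∀ i ∈ Finset.range a, (n / p ^ i % p).choose (p ^ a / p ^ i % p) = 1 := by
      intro i hi
      rw [Finset.mem_range] at hi
      have h3 : p ^ a / p ^ i = p ^ (a - i) := Nat.pow_div hi.le (by omega)
      have h4 : p ^ (a - i) % p = 0 :=
        Nat.dvd_iff_mod_eq_zero.mp (dvd_pow_self p (by omega : a - i ≠ 0))
      rw [h3, h4, Nat.choose_zero_right]
    have h5 : p ^ a / p ^ a % p = 1 := by
      rw [Nat.div_self hppos, Nat.one_mod_eq_one.mpr (by omega)]
    rw [Finset.prod_congr rfl h2, Finset.prod_const_one, one_mul, h5, Nat.choose_one_right,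
      Nat.mod_eq_of_lt hda]
  have hnd : ¬ p ∣ n.choose (p ^ a) := by
    rw [hprod] at hL
    intro hdvd
    have h6 : p ∣ n / p ^ a := (Nat.modEq_zero_iff_dvd.mp (((Nat.modEq_zero_iff_dvd.mpr hdvd).symm.trans hL).symm))
    have := Nat.le_of_dvd hdpos h6
    omega
  exact absurd (h _ hppos hklt) hnd

theorem stmt8 (p : ℕ) [Fact p.Prime] (f : Polynomial (ZMod p)) :
    Polynomial.aeval
        (MvPolynomial.X 0 + MvPolynomial.X 1 : MvPolynomial (Fin 2) (ZMod p)) f =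
      Polynomial.aeval (MvPolynomial.X 0 : MvPolynomial (Fin 2) (ZMod p)) f +
        Polynomial.aeval (MvPolynomial.X 1 : MvPolynomial (Fin 2) (ZMod p)) f ↔
    f ∈ Submodule.span (ZMod p)
        {g : Polynomial (ZMod p) | ∃ i : ℕ, g = X ^ p ^ i} := by
  constructor
  · intro H
    -- transport via φ : MvPolynomial (Fin 2) (ZMod p) →ₐ Polynomial (Polynomial (ZMod p))
    set φ : MvPolynomial (Fin 2) (ZMod p) →ₐ[ZMod p] Polynomial (Polynomial (ZMod p)) :=
      MvPolynomial.aeval ![Polynomial.C Polynomial.X * Polynomial.X, Polynomial.X] with hφ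
    have H2 := congrArg φ H
    rw [map_add] at H2
    rw [← Polynomial.aeval_algHom_apply, ← Polynomial.aeval_algHom_apply,
      ← Polynomial.aeval_algHom_apply] at H2
    have e0 : φ (MvPolynomial.X 0) = Polynomial.C Polynomial.X * Polynomial.X := by
      simp [hφ]
    have e1 : φ (MvPolynomial.X 1) = Polynomial.C (1 : Polynomial (ZMod p)) * Polynomial.X := by
      simp [hφ]
    have e01 : φ (MvPolynomial.X 0 + MvPolynomial.X 1) =
        Polynomial.C (Polynomial.X + 1) * Polynomial.X := by
      simp [hφ, map_add, add_mul]
    rw [e0, e1, e01] at H2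
    -- coefficientwise identity
    have H3 : ∀ n : ℕ, Polynomial.C (f.coeff n) * (Polynomial.X + 1) ^ n =
        Polynomial.C (f.coeff n) * Polynomial.X ^ n + Polynomial.C (f.coeff n) * 1 ^ n := by
      intro n
      have := congrArg (fun q => Polynomial.coeff q n) H2
      simpa only [Polynomial.coeff_add, aux1] using this
    -- every exponent in the support is a power of p
    have hsupp : ∀ n ∈ f.support, ∃ i, n = p ^ i := by
      intro n hn
      have han : f.coeff n ≠ 0 := Polynomial.mem_support_iff.mp hn
      have hnpos : 0 < n := by
        rcases Nat.eq_zero_or_pos n with rfl | h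
        · exfalso
          have := H3 0
          simp only [pow_zero, mul_one] at this
          have h0 : f.coeff 0 = 0 := by
            have h' : f.coeff 0 + f.coeff 0 = f.coeff 0 := by
              have := congrArg (fun q => Polynomial.coeff q 0) this
              simpa using this.symm
            exact add_eq_right.mp h'
          exact han h0
        · exact h
      refine aux2 p hnpos fun k hk0 hkn => ?_
      have := congrArg (fun q => Polynomial.coeff q k) (H3 n)
      simp only [Polynomial.coeff_C_mul, Polynomial.coeff_add, Polynomial.coeff_X_pow,
        if_neg hkn.ne, one_pow, Polynomial.coeff_one, if_neg hk0.ne', mul_zero, add_zero,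
        Polynomial.coeff_X_add_one_pow] at this
      rw [← ZMod.natCast_eq_zero_iff]
      exact (mul_eq_zero.mp this).resolve_left han
    -- conclude membership in the span
    rw [f.as_sum_support]
    refine Submodule.sum_mem _ fun n hn => ?_
    obtain ⟨i, rfl⟩ := hsupp n hn
    rw [← Polynomial.smul_X_eq_monomial]
    exact Submodule.smul_mem _ _ (Submodule.subset_span ⟨i, rfl⟩)
  · intro hf
    induction hf using Submodule.span_induction with
    | mem g hg =>
      obtain ⟨i, rfl⟩ := hg
      simp only [map_pow, Polynomial.aeval_X]
      exact add_pow_char_pow ..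
    | zero => simp
    | add a b _ _ ha hb => simp only [map_add, ha, hb]; ring
    | smul c a _ ha => simp only [map_smul, ha, smul_add]
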